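/- Let N be a positive integer and α < β real numbers. Then there exists a positive integer N₀ such that for all integers n ≥ N₀ there exist coprime integers p, q with q > 0, p/q ∈ [α, β], q ≥ N, and q dividing n. -/

import Mathlib

lemma aux_prodbound (M : ℕ) : ∃ L : ℕ, 0 < L ∧ ∀ n : ℕ, 0 < n →
    (∀ p k : ℕ, p.Prime → p ^ k ∣ n → p ^ k < M) → n ∣ L := by
  refine ⟨∏ p ∈ Finset.filter Nat.Prime (Finset.range M), p ^ M, ?_, ?_⟩
  · exact Finset.prod_pos fun p hp => pow_pos ((Finset.mem_filter.mp hp).2.pos) M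
  · intro n hn h
    conv_lhs => rw [← Nat.factorization_prod_pow_eq_self hn.ne']
    rw [Finsupp.prod]
    have hsub : n.factorization.support ⊆ Finset.filter Nat.Prime (Finset.range M) := by
      intro p hp
      have hpp : p.Prime := Nat.prime_of_mem_primeFactors hp
      have hdvd : p ^ n.factorization p ∣ n := Nat.ordProj_dvd n p
      have h1 : p ^ 1 ∣ n := by
        simpa using (Nat.dvd_of_mem_primeFactors hp)
      have := h p 1 hpp h1
      simp only [pow_one] at this
      exact Finset.mem_filter.mpr ⟨Finset.mem_range.mpr this, hpp⟩
    refine dvd_trans (Finset.prod_dvd_prod_of_dvd _ _ ?_) (Finset.prod_dvd_prod_of_subset _ _ _ hsub)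
    intro p hp
    have hpp : p.Prime := Nat.prime_of_mem_primeFactors hp
    have hdvd : p ^ n.factorization p ∣ n := Nat.ordProj_dvd n p
    have hlt : p ^ n.factorization p < M := h p _ hpp hdvd
    have hle : n.factorization p ≤ M := by
      by_contra hc
      push_neg at hc
      have : M < p ^ n.factorization p :=
        lt_of_lt_of_le (Nat.lt_pow_self hpp.one_lt : M < p ^ M)
          (Nat.pow_le_pow_right hpp.pos hc.le)
      omega
    exact pow_dvd_pow p hle

/-- For every positive integer `N` and reals `α < β`, there is `N₀` such that every
`n ≥ N₀` has a divisor `q ≥ N` which is the denominator of a reduced fraction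
`p/q ∈ [α, β]`. -/
theorem stmt_2 (N : ℕ) (hN : 0 < N) (α β : ℝ) (hαβ : α < β) :
    ∃ N₀ : ℕ, 0 < N₀ ∧ ∀ n : ℕ, N₀ ≤ n →
      ∃ (p : ℤ) (q : ℕ), 0 < q ∧ Int.gcd p (q : ℤ) = 1 ∧
        α ≤ (p : ℝ) / (q : ℝ) ∧ (p : ℝ) / (q : ℝ) ≤ β ∧ N ≤ q ∧ (q : ℤ) ∣ (n : ℤ) := by
  have hβα : 0 < β - α := by linarith
  set M : ℕ := max N (⌈2 / (β - α)⌉₊ + 1) with hM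
  obtain ⟨L, hL0, hL⟩ := aux_prodbound M
  refine ⟨L + 1, Nat.succ_pos L, ?_⟩
  intro n hn
  have hn0 : 0 < n := by omega
  have hnot : ¬ n ∣ L := fun hd => by
    have := Nat.le_of_dvd hL0 hd
    omega
  have : ¬ (∀ p k : ℕ, p.Prime → p ^ k ∣ n → p ^ k < M) := fun hall => hnot (hL n hn0 hall)
  push_neg at this
  obtain ⟨r, k, hr, hrk, hMq⟩ := this
  set q : ℕ := r ^ k with hq
  have hq0 : 0 < q := pow_pos hr.pos k
  -- real bound on q
  have hqM : (M : ℝ) ≤ (q : ℝ) := by exact_mod_cast hMq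
  have h2q : 2 ≤ (β - α) * q := by
    have h1 : 2 / (β - α) ≤ (M : ℝ) := by
      calc 2 / (β - α) ≤ (⌈2 / (β - α)⌉₊ : ℝ) := Nat.le_ceil _
        _ ≤ (M : ℝ) := by exact_mod_cast le_trans (Nat.le_succ _) (le_max_right _ _)
    have h2 : 2 / (β - α) ≤ (q : ℝ) := le_trans h1 hqM
    calc (2 : ℝ) = (2 / (β - α)) * (β - α) := by field_simp
      _ ≤ (q : ℝ) * (β - α) := by
          exact mul_le_mul_of_nonneg_right h2 hβα.le
      _ = (β - α) * q := by ring
  set a : ℤ := ⌈α * q⌉ with ha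
  have haq : α * q ≤ (a : ℝ) := Int.le_ceil _
  have haq' : (a : ℝ) < α * q + 1 := Int.ceil_lt_add_one _
  have hbq : (a : ℝ) + 1 ≤ β * q := by nlinarith
  set p : ℤ := if (r : ℤ) ∣ a then a + 1 else a with hp
  have hple : α * q ≤ (p : ℝ) ∧ (p : ℝ) ≤ β * q := by
    rw [hp]
    split <;> push_cast <;> constructor <;> linarith
  have hndvd : ¬ (r : ℤ) ∣ p := by
    rw [hp]
    split
    · rename_i hd
      intro hd1
      have : (r : ℤ) ∣ 1 := (dvd_add_right hd).mp (by simpa using hd1)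
      have := Int.le_of_dvd one_pos this
      have : (2 : ℤ) ≤ r := by exact_mod_cast hr.two_le
      omega
    · assumption
  have hrZ : Prime (r : ℤ) := Nat.prime_iff_prime_int.mp hr
  have hcop : IsCoprime (p : ℤ) ((q : ℕ) : ℤ) := by
    have : IsCoprime ((r : ℤ)) p := (hrZ.coprime_iff_not_dvd).mpr hndvd
    have := (IsCoprime.pow_left (m := k) this).symm
    rw [hq]
    push_cast
    exact this
  refine ⟨p, q, hq0, Int.isCoprime_iff_gcd_eq_one.mp hcop, ?_, ?_, ?_, ?_⟩
  · rw [le_div_iff₀ (by exact_mod_cast hq0)]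
    exact hple.1
  · rw [div_le_iff₀ (by exact_mod_cast hq0)]
    exact hple.2
  · calc N ≤ M := le_max_left _ _
      _ ≤ q := hMq
  · exact_mod_cast Int.natCast_dvd_natCast.mpr hrk
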